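/- With x_i, g_i, f_i as in the worst-case construction (L > 0, ζ_0 > ⋯ > ζ_{N+1} > ζ_{N+2} = 0), for all 0 ≤ i, j ≤ N+1 the smooth-convex interpolation inequality (1/(2L))‖g_i − g_j‖² ≤ f_j − f_i − ⟨g_i, x_j − x_i⟩ holds. -/

import Mathlib

open RealInnerProductSpace

theorem wc_interpolation_inequality (N : ℕ) (L : ℝ) (hL : 0 < L) (ζ : ℕ → ℝ)
    (hζ : ∀ i j : ℕ, i < j → j ≤ N + 2 → ζ j < ζ i) (hζ0 : ζ (N + 2) = 0)
    (x g : ℕ → EuclideanSpace ℝ (Fin (N + 1))) (fv : ℕ → ℝ)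
    (hx : ∀ i : ℕ, i ≤ N + 1 → ∀ j : Fin (N + 1),
      x i j = if (j : ℕ) < i then -((ζ j - ζ (i + 1)) / Real.sqrt (ζ j - ζ (j + 1))) else 0)
    (hg : ∀ i : ℕ, i ≤ N → ∀ j : Fin (N + 1),
      g i j = if (j : ℕ) = i then L * Real.sqrt (ζ i - ζ (i + 1)) else 0)
    (hgN : g (N + 1) = 0)
    (hfv : ∀ i : ℕ, i ≤ N → fv i = L / 2 * (ζ i + ζ (i + 1)))
    (hfvN : fv (N + 1) = 0) :
    ∀ i j : ℕ, i ≤ N + 1 → j ≤ N + 1 →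
      1 / (2 * L) * ‖g i - g j‖ ^ 2 ≤ fv j - fv i - ⟪g i, x j - x i⟫ := by
  have hpos : ∀ i : ℕ, i ≤ N + 1 → 0 < ζ i - ζ (i + 1) := by
    intro i hi
    have := hζ i (i + 1) (by omega) (by omega)
    linarith
  have hζnn : ∀ i : ℕ, i ≤ N + 2 → 0 ≤ ζ i := by
    intro i hi
    rcases eq_or_lt_of_le hi with h | h
    · rw [h, hζ0]
    · have := hζ i (N + 2) h le_rfl
      rw [hζ0] at this
      linarith
  have hs : ∀ i : ℕ, i ≤ N + 1 → 0 < Real.sqrt (ζ i - ζ (i + 1)) :=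
    fun i hi => Real.sqrt_pos.mpr (hpos i hi)
  have hssq : ∀ i : ℕ, i ≤ N + 1 → Real.sqrt (ζ i - ζ (i + 1)) ^ 2 = ζ i - ζ (i + 1) :=
    fun i hi => Real.sq_sqrt (le_of_lt (hpos i hi))
  -- inner product of g i with anything
  have key : ∀ i : ℕ, (hi : i ≤ N) → ∀ v : EuclideanSpace ℝ (Fin (N + 1)),
      ⟪g i, v⟫ = L * Real.sqrt (ζ i - ζ (i + 1)) * v ⟨i, by omega⟩ := by
    intro i hi v
    rw [show ⟪g i, v⟫ = ∑ k, g i k * v k by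
      simp [PiLp.inner_apply, RCLike.inner_apply, conj_trivial]
      exact Finset.sum_congr rfl fun _ _ => mul_comm _ _]
    rw [Finset.sum_eq_single (⟨i, by omega⟩ : Fin (N + 1))]
    · rw [hg i hi]; simp
    · intro k _ hk
      rw [hg i hi]
      have hki : (k : ℕ) ≠ i := fun h => hk (Fin.ext h)
      simp [hki]
    · simp
  -- ⟪g i, x j⟫
  have hgx : ∀ i : ℕ, (hi : i ≤ N) → ∀ j : ℕ, j ≤ N + 1 →
      ⟪g i, x j⟫ = if i < j then -(L * (ζ i - ζ (j + 1))) else 0 := by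
    intro i hi j hj
    rw [key i hi, hx j hj]
    by_cases hij : i < j
    · simp only [hij, if_true]
      rw [div_eq_mul_inv]
      have hsne := (hs i (by omega)).ne'
      field_simp
    · simp [hij]
  -- norm of g i for i ≤ N
  have hnorm : ∀ i : ℕ, i ≤ N → ‖g i‖ ^ 2 = L ^ 2 * (ζ i - ζ (i + 1)) := by
    intro i hi
    rw [← real_inner_self_eq_norm_sq, key i hi, hg i hi]
    simp only [Fin.val_mk, if_true, ite_true]
    nlinarith [hssq i (by omega)]
  -- orthogonality
  have horth : ∀ i j : ℕ, i ≤ N → j ≤ N + 1 → i ≠ j → ⟪g i, g j⟫ = 0 := by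
    intro i j hi hj hij
    rcases eq_or_lt_of_le hj with h | h
    · rw [h, hgN, inner_zero_right]
    · rw [key i hi, hg j (by omega)]
      have : (i : ℕ) ≠ j := hij
      simp [this]
  intro i j hi hj
  rcases eq_or_lt_of_le hi with hiN | hiN
  · -- i = N + 1
    subst hiN
    rw [hgN, hfvN, inner_zero_left, zero_sub, norm_neg]
    rcases eq_or_lt_of_le hj with hjN | hjN
    · subst hjN
      rw [hgN, hfvN]
      simp
    · have hjN' : j ≤ N := by omega
      rw [hnorm j hjN', hfv j hjN']
      have hz : 0 ≤ ζ (j + 1) := hζnn (j + 1) (by omega)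
      rw [show 1 / (2 * L) * (L ^ 2 * (ζ j - ζ (j + 1))) = L / 2 * (ζ j - ζ (j + 1)) by
        field_simp]
      nlinarith
  · -- i ≤ N
    have hiN' : i ≤ N := by omega
    rw [inner_sub_right, hgx i hiN' j hj, hgx i hiN' i (by omega)]
    simp only [lt_irrefl, if_false, ite_false]
    rcases eq_or_lt_of_le hj with hjN | hjN
    · -- j = N + 1
      subst hjN
      rw [hgN, sub_zero, hnorm i hiN', hfvN, hfv i hiN']
      have hij : i < N + 1 := by omega
      rw [if_pos hij, hζ0]
      rw [show 1 / (2 * L) * (L ^ 2 * (ζ i - ζ (i + 1))) = L / 2 * (ζ i - ζ (i + 1)) by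
        field_simp]
      nlinarith
    · have hjN' : j ≤ N := by omega
      rcases eq_or_ne i j with hij | hij
      · subst hij
        simp [hfv i hiN']
      · have hnormsub : ‖g i - g j‖ ^ 2 =
            L ^ 2 * (ζ i - ζ (i + 1)) + L ^ 2 * (ζ j - ζ (j + 1)) := by
          rw [norm_sub_sq_real, horth i j hiN' hj hij, hnorm i hiN', hnorm j hjN']
          ring
        rw [hnormsub, hfv i hiN', hfv j hjN']
        rw [show 1 / (2 * L) * (L ^ 2 * (ζ i - ζ (i + 1)) + L ^ 2 * (ζ j - ζ (j + 1))) =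
            L / 2 * ((ζ i - ζ (i + 1)) + (ζ j - ζ (j + 1))) by field_simp]
        by_cases hlt : i < j
        · rw [if_pos hlt]
          nlinarith
        · rw [if_neg hlt]
          have hji : j < i := by omega
          have hle : ζ i ≤ ζ (j + 1) := by
            rcases eq_or_lt_of_le (show j + 1 ≤ i by omega) with h | h
            · rw [h]
            · exact le_of_lt (hζ (j + 1) i h (by omega))
          nlinarith
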